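/- Let (v_k)_{k≥1} be a non-decreasing sequence of positive real numbers tending to +∞. Then there exists a non-decreasing sequence (u_k)_{k≥1} of positive real numbers tending to +∞ such that: (a) Σ_{k≥1} u_k/k³ < +∞; (b) u_k/v_k³ → 0 as k → +∞; (c) Σ_{m>k} u_m/((m−k) + v_m)³ → 0 as k → +∞. -/

import Mathlib

open Filter Topology

private lemma key1 {a b c : ℝ} (ha : 0 < a) (hb : 0 < b) (hc : 0 ≤ c) (hcb : c ≤ b) :
    c / (a + b) ^ 3 ≤ 1 / a ^ 2 := by
  rw [div_le_div_iff₀ (by positivity) (by positivity)]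
  nlinarith [sq_nonneg a, sq_nonneg b, mul_pos ha hb, mul_nonneg (mul_nonneg ha.le ha.le) hb.le,
    mul_nonneg (mul_nonneg ha.le hb.le) hb.le]

private lemma key2 {a b c d : ℝ} (ha : 0 < a) (hb : 0 < b) (hc : 0 ≤ c) (hcb : c ≤ b)
    (hd : 0 < d) (hdb : d ≤ b) : c / (a + b) ^ 3 ≤ 1 / d ^ 2 := by
  rw [div_le_div_iff₀ (by positivity) (by positivity)]
  nlinarith [mul_le_mul_of_nonneg_left (mul_le_mul hdb hdb hd.le hb.le) hc,
    mul_le_mul hcb le_rfl (mul_nonneg hd.le hd.le) hb.le,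
    mul_nonneg (mul_nonneg hb.le hb.le) hb.le, sq_nonneg (a+b), mul_pos hb hb,
    mul_nonneg (mul_nonneg ha.le hb.le) hb.le, mul_nonneg (mul_nonneg ha.le ha.le) hb.le,
    mul_nonneg (mul_nonneg ha.le ha.le) ha.le]

theorem exists_good_minorant_sequence
    (v : ℕ → ℝ) (hv_pos : ∀ k, 1 ≤ k → 0 < v k)
    (hv_mono : ∀ k, 1 ≤ k → v k ≤ v (k + 1))
    (hv_top : Tendsto v atTop atTop) :
    ∃ u : ℕ → ℝ,
      (∀ k, 1 ≤ k → 0 < u k) ∧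
      (∀ k, 1 ≤ k → u k ≤ u (k + 1)) ∧
      Tendsto u atTop atTop ∧
      Summable (fun k : ℕ => u k / (k : ℝ) ^ 3) ∧
      Tendsto (fun k : ℕ => u k / (v k) ^ 3) atTop (nhds 0) ∧
      (∀ k : ℕ, Summable (fun m : ℕ => u (k + m + 1) / (((m : ℝ) + 1) + v (k + m + 1)) ^ 3)) ∧
      Tendsto (fun k : ℕ => ∑' m : ℕ, u (k + m + 1) / (((m : ℝ) + 1) + v (k + m + 1)) ^ 3)
        atTop (nhds 0) := by
  -- monotonicity of v on [1, ∞)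
  have hv_mono' : ∀ a b : ℕ, 1 ≤ a → a ≤ b → v a ≤ v b := by
    intro a b ha hab
    induction b, hab using Nat.le_induction with
    | base => exact le_rfl
    | succ n hn ih => exact ih.trans (hv_mono n (ha.trans hn))
  set u : ℕ → ℝ := fun k => min (k : ℝ) (v k) with hu
  have hupos : ∀ k, 1 ≤ k → 0 < u k := fun k hk =>
    lt_min (by exact_mod_cast Nat.lt_of_lt_of_le Nat.zero_lt_one hk) (hv_pos k hk)
  have huv : ∀ k, u k ≤ v k := fun k => min_le_right _ _
  have hun : ∀ k, u k ≤ (k : ℝ) := fun k => min_le_left _ _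
  have hv1 : ∀ k, 1 ≤ k → v (k+1) ≤ v (k+1) := fun _ _ => le_rfl
  refine ⟨u, hupos, ?_, ?_, ?_, ?_, ?_, ?_⟩
  · intro k hk
    exact min_le_min (by exact_mod_cast Nat.le_succ k) (hv_mono k hk)
  · rw [tendsto_atTop]
    intro b
    filter_upwards [tendsto_natCast_atTop_atTop.eventually_ge_atTop b,
      hv_top.eventually_ge_atTop b] with k h1 h2
    exact le_min h1 h2
  · refine Summable.of_nonneg_of_le (f := fun k : ℕ => 1 / (k : ℝ) ^ 2) ?_ ?_
      ((Real.summable_one_div_nat_pow).mpr one_lt_two)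
    · intro k
      rcases Nat.eq_zero_or_pos k with rfl | hk
      · simp
      · exact div_nonneg (hupos k hk).le (by positivity)
    · intro k
      rcases Nat.eq_zero_or_pos k with rfl | hk
      · simp
      · have hk' : (0:ℝ) < k := by exact_mod_cast hk
        rw [div_le_div_iff₀ (by positivity) (by positivity)]
        nlinarith [hun k, (hupos k hk).le]
  · have hvk : ∀ᶠ k in atTop, (1:ℝ) ≤ v k := hv_top.eventually_ge_atTop 1
    refine tendsto_of_tendsto_of_tendsto_of_le_of_le' tendsto_const_nhds
      (hv_top.inv_tendsto_atTop) ?_ ?_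
    · filter_upwards [eventually_ge_atTop 1] with k hk
      have := hv_pos k hk
      exact div_nonneg (hupos k hk).le (by positivity)
    · filter_upwards [eventually_ge_atTop 1, hvk] with k hk hk1
      have hvp := hv_pos k hk
      rw [Pi.inv_apply, inv_eq_one_div, div_le_div_iff₀ (by positivity) hvp]
      nlinarith [huv k, (hupos k hk).le, mul_pos hvp hvp]
  · intro k
    refine Summable.of_nonneg_of_le (f := fun m : ℕ => 1 / ((m : ℝ) + 1) ^ 2) ?_ ?_ ?_
    · intro m
      have h1 : 1 ≤ k + m + 1 := by omega
      have := hv_pos _ h1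
      exact div_nonneg (hupos _ h1).le (by positivity)
    · intro m
      have h1 : 1 ≤ k + m + 1 := by omega
      exact key1 (by positivity) (hv_pos _ h1) (hupos _ h1).le (huv _)
    · have h := (summable_nat_add_iff (f := fun n : ℕ => (1:ℝ)/(n:ℝ)^2) 1).mpr
        ((Real.summable_one_div_nat_pow).mpr one_lt_two)
      simpa using h
  · have h0 : (0:ℝ) = ∑' _ : ℕ, (0:ℝ) := by simp
    rw [h0]
    refine tendsto_tsum_of_dominated_convergence (bound := fun m : ℕ => 1 / ((m : ℝ) + 1) ^ 2)
      ?_ ?_ ?_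
    · have h := (summable_nat_add_iff (f := fun n : ℕ => (1:ℝ)/(n:ℝ)^2) 1).mpr
        ((Real.summable_one_div_nat_pow).mpr one_lt_two)
      simpa using h
    · intro m
      have hvt : Tendsto (fun k : ℕ => v (k+1)) atTop atTop :=
        hv_top.comp (tendsto_add_atTop_nat 1)
      have hsq : Tendsto (fun k : ℕ => (v (k+1))^2) atTop atTop := by
        have := hvt.atTop_mul_atTop₀ hvt
        simpa [sq] using this
      refine tendsto_of_tendsto_of_tendsto_of_le_of_le' tendsto_const_nhds
        (hsq.inv_tendsto_atTop) ?_ ?_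
      · refine Eventually.of_forall fun k => ?_
        have h1 : 1 ≤ k + m + 1 := by omega
        have := hv_pos _ h1
        exact div_nonneg (hupos _ h1).le (by positivity)
      · refine Eventually.of_forall fun k => ?_
        have h1 : 1 ≤ k + m + 1 := by omega
        have h2 : v (k+1) ≤ v (k+m+1) := hv_mono' (k+1) (k+m+1) (by omega) (by omega)
        have := key2 (a := (m:ℝ)+1) (by positivity) (hv_pos _ h1) (hupos _ h1).le (huv _)
          (hv_pos (k+1) (by omega)) h2
        rw [one_div] at this
        exact this
    · refine Eventually.of_forall fun k => fun m => ?_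
      have h1 : 1 ≤ k + m + 1 := by omega
      have hnn : 0 ≤ u (k+m+1) / (((m : ℝ) + 1) + v (k + m + 1)) ^ 3 := by
        have := hv_pos _ h1
        exact div_nonneg (hupos _ h1).le (by positivity)
      rw [Real.norm_of_nonneg hnn]
      exact key1 (by positivity) (hv_pos _ h1) (hupos _ h1).le (huv _)
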